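/- Let r and r₀ be real numbers with r ≥ 1/2 and r₀ ≥ 1. Define G̃¹ : ℕ³ → [0, ∞) by G̃¹(k, k₁, k₂) = χ[|k−k₂| ≤ 10]·2^{(1/2−r)k₁}·2^{(1−r₀)k} + χ[|k−k₁| ≤ 10]·2^{(1/2−r)k₂}·2^{(1−r₀)k} + χ[|k₁−k₂| ≤ 10]·2^{(1−2r)k₁}·2^{(r+1/2−r₀)k}, where χ[·] denotes the indicator of the stated condition. Then G̃¹ satisfies property (G). -/

import Mathlib

noncomputable section

open scoped ENNReal

/-- The condition that the two largest entries of the triple `(k, k₁, k₂)` differ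
by at most 10 (i.e. `max ≤ med + 10`). -/
def nearMax (k k₁ k₂ : ℕ) : Prop :=
  max k (max k₁ k₂) ≤ (k + k₁ + k₂ - max k (max k₁ k₂) - min k (min k₁ k₂)) + 10

instance : ∀ k k₁ k₂, Decidable (nearMax k k₁ k₂) := fun _ _ _ => Nat.decLe _ _

/-- Property (G): the trilinear summation bound for a weight `G : ℕ³ → [0,∞)`,
restricted to triples whose two largest entries differ by at most 10.
The sum is taken in `ℝ≥0∞` so that it is always well defined. -/
def propertyG (G : ℕ → ℕ → ℕ → ℝ) : Prop :=
  ∃ C : ℝ, ∀ a b c : ℕ → ℝ,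
    (∀ n, 0 ≤ a n) → (∀ n, 0 ≤ b n) → (∀ n, 0 ≤ c n) →
    Summable (fun n => (a n) ^ 2) → Summable (fun n => (b n) ^ 2) →
    Summable (fun n => (c n) ^ 2) →
    (∑' p : ℕ × ℕ × ℕ,
        if nearMax p.1 p.2.1 p.2.2 then
          ENNReal.ofReal (G p.1 p.2.1 p.2.2 * a p.1 * b p.2.1 * c p.2.2 /
            ((min p.1 (min p.2.1 p.2.2) : ℝ) + 1) ^ 10)
        else 0) ≤
      ENNReal.ofReal (C * Real.sqrt (∑' n, (a n) ^ 2) * Real.sqrt (∑' n, (b n) ^ 2) *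
        Real.sqrt (∑' n, (c n) ^ 2))

/-- The weight `G̃¹` from Proposition 4.4 (estimates for dyadic pieces, part 2). -/
def Gwt1 (r r₀ : ℝ) (k k₁ k₂ : ℕ) : ℝ :=
  (if |(k : ℤ) - (k₂ : ℤ)| ≤ 10 then
      (2 : ℝ) ^ ((1 / 2 - r) * (k₁ : ℝ)) * (2 : ℝ) ^ ((1 - r₀) * (k : ℝ)) else 0) +
  (if |(k : ℤ) - (k₁ : ℤ)| ≤ 10 then
      (2 : ℝ) ^ ((1 / 2 - r) * (k₂ : ℝ)) * (2 : ℝ) ^ ((1 - r₀) * (k : ℝ)) else 0) +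
  (if |(k₁ : ℤ) - (k₂ : ℤ)| ≤ 10 then
      (2 : ℝ) ^ ((1 - 2 * r) * (k₁ : ℝ)) * (2 : ℝ) ^ ((r + 1 / 2 - r₀) * (k : ℝ)) else 0)

namespace Stmt18Aux

/-- Cauchy–Schwarz for `ℝ≥0∞`-valued series. -/
lemma csE (f g : ℕ → ℝ≥0∞) :
    ∑' n, f n * g n ≤ (∑' n, f n ^ (2:ℝ)) ^ (1/2:ℝ) * (∑' n, g n ^ (2:ℝ)) ^ (1/2:ℝ) := by
  rw [ENNReal.tsum_eq_iSup_sum]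
  refine iSup_le fun s => ?_
  refine le_trans (ENNReal.inner_le_Lp_mul_Lq s f g Real.HolderConjugate.two_two) ?_
  exact mul_le_mul' (ENNReal.rpow_le_rpow (ENNReal.sum_le_tsum s) (by norm_num))
    (ENNReal.rpow_le_rpow (ENNReal.sum_le_tsum s) (by norm_num))

lemma shift_sq_le (g : ℕ → ℝ≥0∞) (d : ℕ) :
    ∑' n : ℕ, g (n + d) ^ (2:ℝ) ≤ ∑' n, g n ^ (2:ℝ) :=
  ENNReal.tsum_comp_le_tsum_of_injective (add_left_injective d) (fun n => g n ^ (2:ℝ))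

lemma diag_sum (f g : ℕ → ℝ≥0∞) (d : ℕ) :
    (∑' q : ℕ × ℕ, (if q.2 = q.1 + d then (1:ℝ≥0∞) else 0) * f q.1 * g q.2)
      ≤ (∑' n, f n ^ (2:ℝ)) ^ (1/2:ℝ) * (∑' n, g n ^ (2:ℝ)) ^ (1/2:ℝ) := by
  have h1 : (∑' q : ℕ × ℕ, (if q.2 = q.1 + d then (1:ℝ≥0∞) else 0) * f q.1 * g q.2)
      = ∑' i : ℕ, f i * g (i + d) := by
    rw [ENNReal.tsum_prod']
    refine tsum_congr fun i => ?_
    have h : ∀ j : ℕ, (if j = i + d then (1:ℝ≥0∞) else 0) * f i * g j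
        = (if j = i + d then f i * g (i + d) else 0) := by
      intro j; split
      · subst ‹j = i + d›; rw [one_mul]
      · rw [zero_mul, zero_mul]
    simp_rw [h]
    exact tsum_ite_eq (i + d) (fun _ => f i * g (i + d))
  rw [h1]
  refine (csE f (fun i => g (i + d))).trans ?_
  exact mul_le_mul_right (ENNReal.rpow_le_rpow (shift_sq_le g d) (by norm_num)) _

lemma diag_sum' (f g : ℕ → ℝ≥0∞) (d : ℕ) :
    (∑' q : ℕ × ℕ, (if q.1 = q.2 + d then (1:ℝ≥0∞) else 0) * f q.1 * g q.2)
      ≤ (∑' n, f n ^ (2:ℝ)) ^ (1/2:ℝ) * (∑' n, g n ^ (2:ℝ)) ^ (1/2:ℝ) := by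
  have h1 : (∑' q : ℕ × ℕ, (if q.1 = q.2 + d then (1:ℝ≥0∞) else 0) * f q.1 * g q.2)
      = ∑' j : ℕ, f (j + d) * g j := by
    rw [ENNReal.tsum_prod', ENNReal.tsum_comm]
    refine tsum_congr fun j => ?_
    have h : ∀ i : ℕ, (if i = j + d then (1:ℝ≥0∞) else 0) * f i * g j
        = (if i = j + d then f (j + d) * g j else 0) := by
      intro i; split
      · subst ‹i = j + d›; rw [one_mul]
      · rw [zero_mul, zero_mul]
    simp_rw [h]
    exact tsum_ite_eq (j + d) (fun _ => f (j + d) * g j)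
  rw [h1]
  refine (csE (fun j => f (j + d)) g).trans ?_
  exact mul_le_mul_left (ENNReal.rpow_le_rpow (shift_sq_le f d) (by norm_num)) _

lemma near_double (f g : ℕ → ℝ≥0∞) :
    (∑' q : ℕ × ℕ, (if |(q.1:ℤ) - (q.2:ℤ)| ≤ 10 then (1:ℝ≥0∞) else 0) * f q.1 * g q.2)
      ≤ 22 * ((∑' n, f n ^ (2:ℝ)) ^ (1/2:ℝ) * (∑' n, g n ^ (2:ℝ)) ^ (1/2:ℝ)) := by
  set B : ℝ≥0∞ := (∑' n, f n ^ (2:ℝ)) ^ (1/2:ℝ) * (∑' n, g n ^ (2:ℝ)) ^ (1/2:ℝ) with hB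
  have hpt : ∀ q : ℕ × ℕ,
      (if |(q.1:ℤ) - (q.2:ℤ)| ≤ 10 then (1:ℝ≥0∞) else 0) * f q.1 * g q.2
        ≤ ∑ d ∈ Finset.range 11,
            (((if q.2 = q.1 + d then (1:ℝ≥0∞) else 0) * f q.1 * g q.2)
              + ((if q.1 = q.2 + d then (1:ℝ≥0∞) else 0) * f q.1 * g q.2)) := by
    rintro ⟨i, j⟩
    dsimp only
    split
    case isTrue h =>
      rw [abs_le] at h
      rcases le_total i j with hij | hij
      · have hmem : j - i ∈ Finset.range 11 := Finset.mem_range.mpr (by omega)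
        refine le_trans ?_ (Finset.single_le_sum (f := fun d =>
          (((if j = i + d then (1:ℝ≥0∞) else 0) * f i * g j)
            + ((if i = j + d then (1:ℝ≥0∞) else 0) * f i * g j)))
          (fun _ _ => zero_le) hmem)
        rw [if_pos (by omega : j = i + (j - i))]
        exact le_self_add
      · have hmem : i - j ∈ Finset.range 11 := Finset.mem_range.mpr (by omega)
        refine le_trans ?_ (Finset.single_le_sum (f := fun d =>
          (((if j = i + d then (1:ℝ≥0∞) else 0) * f i * g j)
            + ((if i = j + d then (1:ℝ≥0∞) else 0) * f i * g j)))
          (fun _ _ => zero_le) hmem)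
        rw [if_pos (by omega : i = j + (i - j))]
        exact le_add_self
    case isFalse h =>
      rw [zero_mul, zero_mul]
      exact zero_le
  refine (ENNReal.tsum_le_tsum hpt).trans ?_
  rw [Summable.tsum_finsetSum (fun _ _ => ENNReal.summable)]
  have hd : ∀ d ∈ Finset.range 11,
      (∑' q : ℕ × ℕ, (((if q.2 = q.1 + d then (1:ℝ≥0∞) else 0) * f q.1 * g q.2)
          + ((if q.1 = q.2 + d then (1:ℝ≥0∞) else 0) * f q.1 * g q.2))) ≤ B + B := by
    intro d _
    rw [ENNReal.tsum_add]
    exact add_le_add (diag_sum f g d) (diag_sum' f g d)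
  refine (Finset.sum_le_sum hd).trans ?_
  rw [Finset.sum_const, Finset.card_range, nsmul_eq_mul]
  have : ((11:ℕ):ℝ≥0∞) * (B + B) = 22 * B := by
    push_cast
    ring
  rw [this]

lemma wsummable : Summable (fun k : ℕ => ((1:ℝ)/((k:ℝ)+1)^10)^2) := by
  have h : Summable (fun n : ℕ => 1 / (n : ℝ) ^ 20) :=
    Real.summable_one_div_nat_pow.mpr (by norm_num)
  have h2 := h.comp_injective Nat.succ_injective
  refine h2.congr fun k => ?_
  show 1 / ((Nat.succ k : ℕ) : ℝ) ^ 20 = ((1:ℝ)/((k:ℝ)+1)^10)^2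
  push_cast
  rw [div_pow, one_pow, ← pow_mul]

lemma helper {A G x y z D u v : ℝ} (hGA : G ≤ A) (hA : 0 ≤ A) (hx : 0 ≤ x) (hy : 0 ≤ y)
    (hz : 0 ≤ z) (hD : 0 < D) (hu : 0 ≤ u) (hv : 0 ≤ v) :
    G * x * y * z / D ≤ A * (x * y * z / D + u + v) := by
  have hq : (0:ℝ) ≤ x * y * z / D := by positivity
  have h1 : G * x * y * z / D ≤ A * (x * y * z / D) := by
    calc G * x * y * z / D = G * (x * y * z / D) := by ring
      _ ≤ A * (x * y * z / D) := mul_le_mul_of_nonneg_right hGA hq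
  nlinarith [mul_nonneg hA hu, mul_nonneg hA hv]

lemma nearMax_min1 {k k₁ k₂ : ℕ} (h : nearMax k k₁ k₂) (h1 : k ≤ k₁) (h2 : k ≤ k₂) :
    |(k₁:ℤ) - (k₂:ℤ)| ≤ 10 := by
  rw [abs_le]; unfold nearMax at h; omega

lemma nearMax_min2 {k k₁ k₂ : ℕ} (h : nearMax k k₁ k₂) (h1 : k₁ ≤ k) (h2 : k₁ ≤ k₂) :
    |(k:ℤ) - (k₂:ℤ)| ≤ 10 := by
  rw [abs_le]; unfold nearMax at h; omega

lemma nearMax_min3 {k k₁ k₂ : ℕ} (h : nearMax k k₁ k₂) (h1 : k₂ ≤ k) (h2 : k₂ ≤ k₁) :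
    |(k:ℤ) - (k₁:ℤ)| ≤ 10 := by
  rw [abs_le]; unfold nearMax at h; omega

lemma nearMax_k_le {k k₁ k₂ : ℕ} (h : nearMax k k₁ k₂) (hc : |(k₁:ℤ) - (k₂:ℤ)| ≤ 10) :
    k ≤ k₁ + 20 := by
  rw [abs_le] at hc; unfold nearMax at h; omega

lemma weight_le (a : ℕ → ℝ) (ha : ∀ n, 0 ≤ a n) :
    (∑' k : ℕ, ENNReal.ofReal (a k / ((k:ℝ)+1)^10))
      ≤ (∑' n : ℕ, ENNReal.ofReal (a n) ^ (2:ℝ)) ^ (1/2:ℝ) *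
        (∑' k : ℕ, ENNReal.ofReal ((1:ℝ)/((k:ℝ)+1)^10) ^ (2:ℝ)) ^ (1/2:ℝ) := by
  have h : ∀ k : ℕ, ENNReal.ofReal (a k / ((k:ℝ)+1)^10)
      = ENNReal.ofReal (a k) * ENNReal.ofReal ((1:ℝ)/((k:ℝ)+1)^10) := by
    intro k
    rw [← ENNReal.ofReal_mul (ha k)]
    congr 1
    field_simp
  refine le_trans (le_of_eq (tsum_congr h)) (csE _ _)

def swap12 : ℕ × ℕ × ℕ ≃ ℕ × ℕ × ℕ :=
  ⟨fun p => (p.2.1, p.1, p.2.2), fun p => (p.2.1, p.1, p.2.2),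
    fun ⟨_, _, _⟩ => rfl, fun ⟨_, _, _⟩ => rfl⟩

def rot3 : ℕ × ℕ × ℕ ≃ ℕ × ℕ × ℕ :=
  ⟨fun p => (p.2.2, p.1, p.2.1), fun p => (p.2.1, p.2.2, p.1),
    fun ⟨_, _, _⟩ => rfl, fun ⟨_, _, _⟩ => rfl⟩

lemma tripleP1 (w f g : ℕ → ℝ≥0∞) (P : ℕ → ℕ → Prop) [∀ i j, Decidable (P i j)] :
    (∑' p : ℕ × ℕ × ℕ, w p.1 * ((if P p.2.1 p.2.2 then (1:ℝ≥0∞) else 0) * f p.2.1 * g p.2.2))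
      = (∑' k, w k) *
        (∑' q : ℕ × ℕ, (if P q.1 q.2 then (1:ℝ≥0∞) else 0) * f q.1 * g q.2) := by
  rw [ENNReal.tsum_prod']
  simp_rw [ENNReal.tsum_mul_left]
  exact ENNReal.tsum_mul_right (f := fun a => w a)
    (a := ∑' q : ℕ × ℕ, (if P q.1 q.2 then (1:ℝ≥0∞) else 0) * f q.1 * g q.2)

lemma tripleP2 (w f g : ℕ → ℝ≥0∞) (P : ℕ → ℕ → Prop) [∀ i j, Decidable (P i j)] :
    (∑' p : ℕ × ℕ × ℕ, w p.2.1 * ((if P p.1 p.2.2 then (1:ℝ≥0∞) else 0) * f p.1 * g p.2.2))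
      = (∑' k, w k) *
        (∑' q : ℕ × ℕ, (if P q.1 q.2 then (1:ℝ≥0∞) else 0) * f q.1 * g q.2) := by
  refine Eq.trans (tsum_congr fun p => ?_)
    ((Equiv.tsum_eq swap12 (fun p : ℕ × ℕ × ℕ =>
      w p.1 * ((if P p.2.1 p.2.2 then (1:ℝ≥0∞) else 0) * f p.2.1 * g p.2.2))).trans
      (tripleP1 w f g P))
  rfl

lemma tripleP3 (w f g : ℕ → ℝ≥0∞) (P : ℕ → ℕ → Prop) [∀ i j, Decidable (P i j)] :
    (∑' p : ℕ × ℕ × ℕ, w p.2.2 * ((if P p.1 p.2.1 then (1:ℝ≥0∞) else 0) * f p.1 * g p.2.1))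
      = (∑' k, w k) *
        (∑' q : ℕ × ℕ, (if P q.1 q.2 then (1:ℝ≥0∞) else 0) * f q.1 * g q.2) := by
  refine Eq.trans (tsum_congr fun p => ?_)
    ((Equiv.tsum_eq rot3 (fun p : ℕ × ℕ × ℕ =>
      w p.1 * ((if P p.2.1 p.2.2 then (1:ℝ≥0∞) else 0) * f p.2.1 * g p.2.2))).trans
      (tripleP1 w f g P))
  rfl

lemma sq_half (x : ℕ → ℝ) (hx : ∀ n, 0 ≤ x n) (hs : Summable fun n => x n ^ 2) :
    (∑' n, ENNReal.ofReal (x n) ^ (2:ℝ)) ^ (1/2:ℝ)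
      = ENNReal.ofReal (Real.sqrt (∑' n, x n ^ 2)) := by
  have h1 : ∀ n, ENNReal.ofReal (x n) ^ (2:ℝ) = ENNReal.ofReal (x n ^ 2) := by
    intro n
    rw [ENNReal.ofReal_rpow_of_nonneg (hx n) (by norm_num)]
    rw [show (2:ℝ) = ((2:ℕ):ℝ) by norm_num, Real.rpow_natCast]
  rw [tsum_congr h1, ← ENNReal.ofReal_tsum_of_nonneg (fun n => sq_nonneg _) hs,
    ENNReal.ofReal_rpow_of_nonneg (tsum_nonneg fun n => sq_nonneg _) (by norm_num),
    ← Real.sqrt_eq_rpow]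

end Stmt18Aux

set_option maxHeartbeats 1000000 in
theorem stmt18 (r r₀ : ℝ) (hr : 1 / 2 ≤ r) (hr₀ : 1 ≤ r₀) :
    propertyG (Gwt1 r r₀) := by
  classical
  set A : ℝ := 3 + (2:ℝ) ^ (20 * (r + 1/2 - r₀)) with hAdef
  have hA0 : (0:ℝ) ≤ A := by rw [hAdef]; positivity
  refine ⟨66 * A * Real.sqrt (∑' k : ℕ, ((1:ℝ)/((k:ℝ)+1)^10)^2), ?_⟩
  intro a b c ha hb hc sa sb sc
  have hG : ∀ k k₁ k₂ : ℕ, nearMax k k₁ k₂ → Gwt1 r r₀ k k₁ k₂ ≤ A := by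
    intro k k₁ k₂ hnm
    have ck : (0:ℝ) ≤ (k:ℝ) := Nat.cast_nonneg k
    have ck₁ : (0:ℝ) ≤ (k₁:ℝ) := Nat.cast_nonneg k₁
    have ck₂ : (0:ℝ) ≤ (k₂:ℝ) := Nat.cast_nonneg k₂
    have hpow : (0:ℝ) < (2:ℝ) ^ (20 * (r + 1/2 - r₀)) := Real.rpow_pos_of_pos two_pos _
    have t1le : (if |(k : ℤ) - (k₂ : ℤ)| ≤ 10 then
        (2:ℝ) ^ ((1/2 - r) * (k₁:ℝ)) * (2:ℝ) ^ ((1 - r₀) * (k:ℝ)) else 0) ≤ 1 := by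
      split
      · have e1 : (2:ℝ) ^ ((1/2 - r) * (k₁:ℝ)) ≤ 1 :=
          Real.rpow_le_one_of_one_le_of_nonpos one_le_two
            (by nlinarith [mul_nonneg (show (0:ℝ) ≤ r - 1/2 by linarith) ck₁])
        have e2 : (2:ℝ) ^ ((1 - r₀) * (k:ℝ)) ≤ 1 :=
          Real.rpow_le_one_of_one_le_of_nonpos one_le_two
            (by nlinarith [mul_nonneg (show (0:ℝ) ≤ r₀ - 1 by linarith) ck])
        have e3 : (0:ℝ) ≤ (2:ℝ) ^ ((1 - r₀) * (k:ℝ)) := (Real.rpow_pos_of_pos two_pos _).le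
        nlinarith
      · norm_num
    have t2le : (if |(k : ℤ) - (k₁ : ℤ)| ≤ 10 then
        (2:ℝ) ^ ((1/2 - r) * (k₂:ℝ)) * (2:ℝ) ^ ((1 - r₀) * (k:ℝ)) else 0) ≤ 1 := by
      split
      · have e1 : (2:ℝ) ^ ((1/2 - r) * (k₂:ℝ)) ≤ 1 :=
          Real.rpow_le_one_of_one_le_of_nonpos one_le_two
            (by nlinarith [mul_nonneg (show (0:ℝ) ≤ r - 1/2 by linarith) ck₂])
        have e2 : (2:ℝ) ^ ((1 - r₀) * (k:ℝ)) ≤ 1 :=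
          Real.rpow_le_one_of_one_le_of_nonpos one_le_two
            (by nlinarith [mul_nonneg (show (0:ℝ) ≤ r₀ - 1 by linarith) ck])
        have e3 : (0:ℝ) ≤ (2:ℝ) ^ ((1 - r₀) * (k:ℝ)) := (Real.rpow_pos_of_pos two_pos _).le
        nlinarith
      · norm_num
    have t3le : (if |(k₁ : ℤ) - (k₂ : ℤ)| ≤ 10 then
        (2:ℝ) ^ ((1 - 2 * r) * (k₁:ℝ)) * (2:ℝ) ^ ((r + 1/2 - r₀) * (k:ℝ)) else 0)
          ≤ 1 + (2:ℝ) ^ (20 * (r + 1/2 - r₀)) := by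
      split
      case isTrue hcl =>
        have hk20 : (k:ℝ) ≤ (k₁:ℝ) + 20 := by
          exact_mod_cast Stmt18Aux.nearMax_k_le hnm hcl
        rw [← Real.rpow_add two_pos]
        rcases le_or_gt (r + 1/2 - r₀) 0 with he0 | he0
        · have h1 : (1 - 2 * r) * (k₁:ℝ) ≤ 0 := by
            nlinarith [mul_nonneg (show (0:ℝ) ≤ 2 * r - 1 by linarith) ck₁]
          have h2 : (r + 1/2 - r₀) * (k:ℝ) ≤ 0 := by
            nlinarith [mul_nonneg (show (0:ℝ) ≤ r₀ - r - 1/2 by linarith) ck]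
          have := Real.rpow_le_one_of_one_le_of_nonpos one_le_two
            (by linarith : (1 - 2 * r) * (k₁:ℝ) + (r + 1/2 - r₀) * (k:ℝ) ≤ 0)
          linarith
        · have hexp : (1 - 2 * r) * (k₁:ℝ) + (r + 1/2 - r₀) * (k:ℝ)
              ≤ 20 * (r + 1/2 - r₀) := by
            nlinarith [mul_le_mul_of_nonneg_left hk20 he0.le,
              mul_nonneg ck₁ (show (0:ℝ) ≤ r + r₀ - 3/2 by linarith)]
          have := Real.rpow_le_rpow_of_exponent_le one_le_two hexp
          linarith
      case isFalse h => positivity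
    rw [hAdef]
    unfold Gwt1
    linarith
  have key : ∀ p : ℕ × ℕ × ℕ,
      (if nearMax p.1 p.2.1 p.2.2 then
          ENNReal.ofReal (Gwt1 r r₀ p.1 p.2.1 p.2.2 * a p.1 * b p.2.1 * c p.2.2 /
            ((min p.1 (min p.2.1 p.2.2) : ℝ) + 1) ^ 10)
        else 0)
      ≤ ENNReal.ofReal A *
        ((ENNReal.ofReal (a p.1 / ((p.1:ℝ)+1)^10) *
            ((if |(p.2.1:ℤ) - (p.2.2:ℤ)| ≤ 10 then (1:ℝ≥0∞) else 0) *
              ENNReal.ofReal (b p.2.1) * ENNReal.ofReal (c p.2.2)))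
          + (ENNReal.ofReal (b p.2.1 / ((p.2.1:ℝ)+1)^10) *
            ((if |(p.1:ℤ) - (p.2.2:ℤ)| ≤ 10 then (1:ℝ≥0∞) else 0) *
              ENNReal.ofReal (a p.1) * ENNReal.ofReal (c p.2.2)))
          + (ENNReal.ofReal (c p.2.2 / ((p.2.2:ℝ)+1)^10) *
            ((if |(p.1:ℤ) - (p.2.1:ℤ)| ≤ 10 then (1:ℝ≥0∞) else 0) *
              ENNReal.ofReal (a p.1) * ENNReal.ofReal (b p.2.1)))) := by
    rintro ⟨k, k₁, k₂⟩
    dsimp only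
    split
    case isFalse h => exact zero_le
    case isTrue hnm =>
    rcases le_total k k₁ with h1 | h1
    · rcases le_total k k₂ with h2 | h2
      · -- min = k, use the first term
        have hmin : min (k:ℝ) (min (k₁:ℝ) (k₂:ℝ)) = (k:ℝ) :=
          min_eq_left (le_min (by exact_mod_cast h1) (by exact_mod_cast h2))
        have hind : |(k₁:ℤ) - (k₂:ℤ)| ≤ 10 := Stmt18Aux.nearMax_min1 hnm h1 h2
        refine le_trans ?_ (mul_le_mul_right (le_self_add.trans le_self_add) _)
        rw [hmin, if_pos hind, one_mul,
          ← ENNReal.ofReal_mul (hb k₁),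
          ← ENNReal.ofReal_mul (div_nonneg (ha k) (by positivity)),
          ← ENNReal.ofReal_mul hA0]
        refine ENNReal.ofReal_le_ofReal ?_
        have hq : (0:ℝ) ≤ a k * b k₁ * c k₂ / ((k:ℝ)+1)^10 :=
          div_nonneg (mul_nonneg (mul_nonneg (ha k) (hb k₁)) (hc k₂)) (by positivity)
        calc Gwt1 r r₀ k k₁ k₂ * a k * b k₁ * c k₂ / ((k:ℝ)+1)^10
            = Gwt1 r r₀ k k₁ k₂ * (a k * b k₁ * c k₂ / ((k:ℝ)+1)^10) := by ring
          _ ≤ A * (a k * b k₁ * c k₂ / ((k:ℝ)+1)^10) :=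
              mul_le_mul_of_nonneg_right (hG k k₁ k₂ hnm) hq
          _ = A * (a k / ((k:ℝ)+1)^10 * (b k₁ * c k₂)) := by ring
      · -- k₂ ≤ k ≤ k₁ : min = k₂, use the third term
        have hmin : min (k:ℝ) (min (k₁:ℝ) (k₂:ℝ)) = (k₂:ℝ) := by
          rw [min_eq_right (show (k₂:ℝ) ≤ (k₁:ℝ) by exact_mod_cast le_trans h2 h1),
            min_eq_right (show (k₂:ℝ) ≤ (k:ℝ) by exact_mod_cast h2)]
        have hind : |(k:ℤ) - (k₁:ℤ)| ≤ 10 :=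
          Stmt18Aux.nearMax_min3 hnm h2 (le_trans h2 h1)
        refine le_trans ?_ (mul_le_mul_right le_add_self _)
        rw [hmin, if_pos hind, one_mul,
          ← ENNReal.ofReal_mul (ha k),
          ← ENNReal.ofReal_mul (div_nonneg (hc k₂) (by positivity)),
          ← ENNReal.ofReal_mul hA0]
        refine ENNReal.ofReal_le_ofReal ?_
        have hq : (0:ℝ) ≤ a k * b k₁ * c k₂ / ((k₂:ℝ)+1)^10 :=
          div_nonneg (mul_nonneg (mul_nonneg (ha k) (hb k₁)) (hc k₂)) (by positivity)
        calc Gwt1 r r₀ k k₁ k₂ * a k * b k₁ * c k₂ / ((k₂:ℝ)+1)^10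
            = Gwt1 r r₀ k k₁ k₂ * (a k * b k₁ * c k₂ / ((k₂:ℝ)+1)^10) := by ring
          _ ≤ A * (a k * b k₁ * c k₂ / ((k₂:ℝ)+1)^10) :=
              mul_le_mul_of_nonneg_right (hG k k₁ k₂ hnm) hq
          _ = A * (c k₂ / ((k₂:ℝ)+1)^10 * (a k * b k₁)) := by ring
    · rcases le_total k₁ k₂ with h2 | h2
      · -- min = k₁, use the second term
        have hmin : min (k:ℝ) (min (k₁:ℝ) (k₂:ℝ)) = (k₁:ℝ) := by
          rw [min_eq_left (show (k₁:ℝ) ≤ (k₂:ℝ) by exact_mod_cast h2),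
            min_eq_right (show (k₁:ℝ) ≤ (k:ℝ) by exact_mod_cast h1)]
        have hind : |(k:ℤ) - (k₂:ℤ)| ≤ 10 := Stmt18Aux.nearMax_min2 hnm h1 h2
        refine le_trans ?_ (mul_le_mul_right (le_add_self.trans le_self_add) _)
        rw [hmin, if_pos hind, one_mul,
          ← ENNReal.ofReal_mul (ha k),
          ← ENNReal.ofReal_mul (div_nonneg (hb k₁) (by positivity)),
          ← ENNReal.ofReal_mul hA0]
        refine ENNReal.ofReal_le_ofReal ?_
        have hq : (0:ℝ) ≤ a k * b k₁ * c k₂ / ((k₁:ℝ)+1)^10 :=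
          div_nonneg (mul_nonneg (mul_nonneg (ha k) (hb k₁)) (hc k₂)) (by positivity)
        calc Gwt1 r r₀ k k₁ k₂ * a k * b k₁ * c k₂ / ((k₁:ℝ)+1)^10
            = Gwt1 r r₀ k k₁ k₂ * (a k * b k₁ * c k₂ / ((k₁:ℝ)+1)^10) := by ring
          _ ≤ A * (a k * b k₁ * c k₂ / ((k₁:ℝ)+1)^10) :=
              mul_le_mul_of_nonneg_right (hG k k₁ k₂ hnm) hq
          _ = A * (b k₁ / ((k₁:ℝ)+1)^10 * (a k * c k₂)) := by ring
      · -- k₂ ≤ k₁ ≤ k : min = k₂, use the third term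
        have hmin : min (k:ℝ) (min (k₁:ℝ) (k₂:ℝ)) = (k₂:ℝ) := by
          rw [min_eq_right (show (k₂:ℝ) ≤ (k₁:ℝ) by exact_mod_cast h2),
            min_eq_right (show (k₂:ℝ) ≤ (k:ℝ) by exact_mod_cast le_trans h2 h1)]
        have hind : |(k:ℤ) - (k₁:ℤ)| ≤ 10 :=
          Stmt18Aux.nearMax_min3 hnm (le_trans h2 h1) h2
        refine le_trans ?_ (mul_le_mul_right le_add_self _)
        rw [hmin, if_pos hind, one_mul,
          ← ENNReal.ofReal_mul (ha k),
          ← ENNReal.ofReal_mul (div_nonneg (hc k₂) (by positivity)),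
          ← ENNReal.ofReal_mul hA0]
        refine ENNReal.ofReal_le_ofReal ?_
        have hq : (0:ℝ) ≤ a k * b k₁ * c k₂ / ((k₂:ℝ)+1)^10 :=
          div_nonneg (mul_nonneg (mul_nonneg (ha k) (hb k₁)) (hc k₂)) (by positivity)
        calc Gwt1 r r₀ k k₁ k₂ * a k * b k₁ * c k₂ / ((k₂:ℝ)+1)^10
            = Gwt1 r r₀ k k₁ k₂ * (a k * b k₁ * c k₂ / ((k₂:ℝ)+1)^10) := by ring
          _ ≤ A * (a k * b k₁ * c k₂ / ((k₂:ℝ)+1)^10) :=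
              mul_le_mul_of_nonneg_right (hG k k₁ k₂ hnm) hq
          _ = A * (c k₂ / ((k₂:ℝ)+1)^10 * (a k * b k₁)) := by ring
  -- abbreviations (ENNReal level)
  have eSA := Stmt18Aux.sq_half a ha sa
  have eSB := Stmt18Aux.sq_half b hb sb
  have eSC := Stmt18Aux.sq_half c hc sc
  have eK := Stmt18Aux.sq_half (fun k => (1:ℝ)/((k:ℝ)+1)^10)
    (fun n => by positivity) Stmt18Aux.wsummable
  calc (∑' p : ℕ × ℕ × ℕ,
        if nearMax p.1 p.2.1 p.2.2 then
          ENNReal.ofReal (Gwt1 r r₀ p.1 p.2.1 p.2.2 * a p.1 * b p.2.1 * c p.2.2 /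
            ((min p.1 (min p.2.1 p.2.2) : ℝ) + 1) ^ 10)
        else 0)
      ≤ ∑' p : ℕ × ℕ × ℕ, ENNReal.ofReal A *
        ((ENNReal.ofReal (a p.1 / ((p.1:ℝ)+1)^10) *
            ((if |(p.2.1:ℤ) - (p.2.2:ℤ)| ≤ 10 then (1:ℝ≥0∞) else 0) *
              ENNReal.ofReal (b p.2.1) * ENNReal.ofReal (c p.2.2)))
          + (ENNReal.ofReal (b p.2.1 / ((p.2.1:ℝ)+1)^10) *
            ((if |(p.1:ℤ) - (p.2.2:ℤ)| ≤ 10 then (1:ℝ≥0∞) else 0) *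
              ENNReal.ofReal (a p.1) * ENNReal.ofReal (c p.2.2)))
          + (ENNReal.ofReal (c p.2.2 / ((p.2.2:ℝ)+1)^10) *
            ((if |(p.1:ℤ) - (p.2.1:ℤ)| ≤ 10 then (1:ℝ≥0∞) else 0) *
              ENNReal.ofReal (a p.1) * ENNReal.ofReal (b p.2.1)))) :=
      ENNReal.tsum_le_tsum key
    _ = ENNReal.ofReal A *
        ((∑' p : ℕ × ℕ × ℕ, ENNReal.ofReal (a p.1 / ((p.1:ℝ)+1)^10) *
            ((if |(p.2.1:ℤ) - (p.2.2:ℤ)| ≤ 10 then (1:ℝ≥0∞) else 0) *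
              ENNReal.ofReal (b p.2.1) * ENNReal.ofReal (c p.2.2)))
          + (∑' p : ℕ × ℕ × ℕ, ENNReal.ofReal (b p.2.1 / ((p.2.1:ℝ)+1)^10) *
            ((if |(p.1:ℤ) - (p.2.2:ℤ)| ≤ 10 then (1:ℝ≥0∞) else 0) *
              ENNReal.ofReal (a p.1) * ENNReal.ofReal (c p.2.2)))
          + (∑' p : ℕ × ℕ × ℕ, ENNReal.ofReal (c p.2.2 / ((p.2.2:ℝ)+1)^10) *
            ((if |(p.1:ℤ) - (p.2.1:ℤ)| ≤ 10 then (1:ℝ≥0∞) else 0) *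
              ENNReal.ofReal (a p.1) * ENNReal.ofReal (b p.2.1)))) := by
        rw [ENNReal.tsum_mul_left, ENNReal.tsum_add, ENNReal.tsum_add]
    _ ≤ ENNReal.ofReal A *
        ((((∑' n, ENNReal.ofReal (a n) ^ (2:ℝ)) ^ (1/2:ℝ) *
            (∑' k : ℕ, ENNReal.ofReal ((1:ℝ)/((k:ℝ)+1)^10) ^ (2:ℝ)) ^ (1/2:ℝ)) *
          (22 * ((∑' n, ENNReal.ofReal (b n) ^ (2:ℝ)) ^ (1/2:ℝ) *
            (∑' n, ENNReal.ofReal (c n) ^ (2:ℝ)) ^ (1/2:ℝ))))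
        + (((∑' n, ENNReal.ofReal (b n) ^ (2:ℝ)) ^ (1/2:ℝ) *
            (∑' k : ℕ, ENNReal.ofReal ((1:ℝ)/((k:ℝ)+1)^10) ^ (2:ℝ)) ^ (1/2:ℝ)) *
          (22 * ((∑' n, ENNReal.ofReal (a n) ^ (2:ℝ)) ^ (1/2:ℝ) *
            (∑' n, ENNReal.ofReal (c n) ^ (2:ℝ)) ^ (1/2:ℝ))))
        + (((∑' n, ENNReal.ofReal (c n) ^ (2:ℝ)) ^ (1/2:ℝ) *
            (∑' k : ℕ, ENNReal.ofReal ((1:ℝ)/((k:ℝ)+1)^10) ^ (2:ℝ)) ^ (1/2:ℝ)) *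
          (22 * ((∑' n, ENNReal.ofReal (a n) ^ (2:ℝ)) ^ (1/2:ℝ) *
            (∑' n, ENNReal.ofReal (b n) ^ (2:ℝ)) ^ (1/2:ℝ))))) := by
        refine mul_le_mul_right (add_le_add (add_le_add ?_ ?_) ?_) _
        · rw [Stmt18Aux.tripleP1 (fun k => ENNReal.ofReal (a k / ((k:ℝ)+1)^10))
            (fun n => ENNReal.ofReal (b n)) (fun n => ENNReal.ofReal (c n))
            (fun i j => |(i:ℤ) - (j:ℤ)| ≤ 10)]
          exact mul_le_mul' (Stmt18Aux.weight_le a ha) (Stmt18Aux.near_double _ _)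
        · rw [Stmt18Aux.tripleP2 (fun k => ENNReal.ofReal (b k / ((k:ℝ)+1)^10))
            (fun n => ENNReal.ofReal (a n)) (fun n => ENNReal.ofReal (c n))
            (fun i j => |(i:ℤ) - (j:ℤ)| ≤ 10)]
          exact mul_le_mul' (Stmt18Aux.weight_le b hb) (Stmt18Aux.near_double _ _)
        · rw [Stmt18Aux.tripleP3 (fun k => ENNReal.ofReal (c k / ((k:ℝ)+1)^10))
            (fun n => ENNReal.ofReal (a n)) (fun n => ENNReal.ofReal (b n))
            (fun i j => |(i:ℤ) - (j:ℤ)| ≤ 10)]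
          exact mul_le_mul' (Stmt18Aux.weight_le c hc) (Stmt18Aux.near_double _ _)
    _ = ENNReal.ofReal A * (66 *
          ((∑' k : ℕ, ENNReal.ofReal ((1:ℝ)/((k:ℝ)+1)^10) ^ (2:ℝ)) ^ (1/2:ℝ) *
            ((∑' n, ENNReal.ofReal (a n) ^ (2:ℝ)) ^ (1/2:ℝ) *
              ((∑' n, ENNReal.ofReal (b n) ^ (2:ℝ)) ^ (1/2:ℝ) *
                (∑' n, ENNReal.ofReal (c n) ^ (2:ℝ)) ^ (1/2:ℝ))))) := by ring
    _ = ENNReal.ofReal (A * (66 * (Real.sqrt (∑' k : ℕ, ((1:ℝ)/((k:ℝ)+1)^10)^2) *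
          (Real.sqrt (∑' n, a n ^ 2) *
            (Real.sqrt (∑' n, b n ^ 2) * Real.sqrt (∑' n, c n ^ 2)))))) := by
        rw [eSA, eSB, eSC, eK,
          show (66:ℝ≥0∞) = ENNReal.ofReal (66:ℝ) from (ENNReal.ofReal_ofNat 66).symm,
          ← ENNReal.ofReal_mul (Real.sqrt_nonneg _),
          ← ENNReal.ofReal_mul (Real.sqrt_nonneg _),
          ← ENNReal.ofReal_mul (Real.sqrt_nonneg _),
          ← ENNReal.ofReal_mul (by norm_num : (0:ℝ) ≤ 66),
          ← ENNReal.ofReal_mul hA0]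
    _ ≤ ENNReal.ofReal (66 * A * Real.sqrt (∑' k : ℕ, ((1:ℝ)/((k:ℝ)+1)^10)^2) *
          Real.sqrt (∑' n, a n ^ 2) * Real.sqrt (∑' n, b n ^ 2) *
          Real.sqrt (∑' n, c n ^ 2)) :=
        ENNReal.ofReal_le_ofReal (le_of_eq (by ring))
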